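/- Let F : Σ^{ℤ^d} → Σ^{ℤ^d} be a cellular automaton and X ⊆ Σ^{ℤ^d} an SFT. If F stabilises X from finite perturbations in linear time (i.e. in time τ(n) with τ(n) = O(n)), then F stabilises X from random perturbations: F(x) = x for all x ∈ X, and for every δ > 0 there exists ε > 0 such that for every x ∈ X and every ε-perturbation x̃ of x, there exists a random configuration y ∈ X on the same probability space with (attraction) F^t(x̃) → y almost surely in the product topology as t → ∞ (i.e. for each cell k, F^t(x̃)_k = y_k for all sufficiently large t), and (stability) P(y_k ≠ x_k) ≤ δ for each k ∈ ℤ^d. -/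

import Mathlib

open MeasureTheory

/-- The set of cells where two configurations on `ℤ^d` disagree. -/
def diffSet {d : ℕ} {A : Type} (x y : (Fin d → ℤ) → A) : Set (Fin d → ℤ) :=
  {i | x i ≠ y i}

/-- The diameter of a set `S ⊆ ℤ^d`: the least `m` with `S ⊆ i + [0,m)^d`. -/
noncomputable def diamd {d : ℕ} (S : Set (Fin d → ℤ)) : ℕ :=
  sInf {m : ℕ | ∃ i : Fin d → ℤ, ∀ a ∈ S, ∀ j, i j ≤ a j ∧ a j < i j + (m : ℤ)}

/-- `δ(y, X)`: the least diameter of a finite difference set between `y` and an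
element of `X`. -/
noncomputable def pdist {d : ℕ} {A : Type} (X : Set ((Fin d → ℤ) → A))
    (y : (Fin d → ℤ) → A) : ℕ :=
  sInf {n : ℕ | ∃ x ∈ X, (diffSet x y).Finite ∧ diamd (diffSet x y) = n}

/-- `X ⊆ A^{ℤ^d}` is an SFT: it is determined by a finite window `U` and a set
`P` of allowed patterns on `U`. -/
def IsSFT {d : ℕ} {A : Type} (X : Set ((Fin d → ℤ) → A)) : Prop :=
  ∃ (U : Finset (Fin d → ℤ)) (P : Set ({u // u ∈ U} → A)),
    X = {x | ∀ i : Fin d → ℤ, (fun u : {u // u ∈ U} => x (i + u.val)) ∈ P}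

namespace Stab17

variable {d : ℕ} {A : Type}

/-- sup-distance on `ℤ^d`. -/
def nd {d : ℕ} (a b : Fin d → ℤ) : ℕ := Finset.univ.sup fun j => (a j - b j).natAbs

lemma nd_le_iff {a b : Fin d → ℤ} {R : ℕ} : nd a b ≤ R ↔ ∀ j, (a j - b j).natAbs ≤ R := by
  simp [nd, Finset.sup_le_iff]

lemma nd_self (a : Fin d → ℤ) : nd a a = 0 := by
  simp [nd]

lemma nd_symm (a b : Fin d → ℤ) : nd a b = nd b a := by
  unfold nd; congr 1; funext j; omega

lemma nd_triangle (a b c : Fin d → ℤ) : nd a c ≤ nd a b + nd b c := by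
  rw [nd_le_iff]
  intro j
  have h1 : (a j - b j).natAbs ≤ nd a b :=
    Finset.le_sup (f := fun j => (a j - b j).natAbs) (Finset.mem_univ j)
  have h2 : (b j - c j).natAbs ≤ nd b c :=
    Finset.le_sup (f := fun j => (b j - c j).natAbs) (Finset.mem_univ j)
  omega

/-- the finset box of radius `R` around `i`. -/
noncomputable def ballF (i : Fin d → ℤ) (R : ℕ) : Finset (Fin d → ℤ) :=
  Finset.Icc (fun j => i j - R) (fun j => i j + R)

lemma mem_ballF {i a : Fin d → ℤ} {R : ℕ} : a ∈ ballF i R ↔ nd a i ≤ R := by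
  rw [ballF, Finset.mem_Icc, nd_le_iff]
  constructor
  · rintro ⟨h1, h2⟩ j
    have := h1 j; have := h2 j; simp only [Pi.le_def] at *
    have := h1 j; have := h2 j
    omega
  · intro h
    constructor <;> intro j <;> have := h j <;> simp only [] <;> omega

lemma card_ballF (i : Fin d → ℤ) (R : ℕ) : (ballF i R).card = (2 * R + 1) ^ d := by
  rw [ballF, Pi.card_Icc]
  have : ∀ j : Fin d, (Finset.Icc (i j - R) (i j + R)).card = 2 * R + 1 := by
    intro j
    rw [Int.card_Icc]
    omega
  rw [Finset.prod_congr rfl (fun j _ => this j)]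
  simp [Finset.card_univ]

lemma finite_ball (i : Fin d → ℤ) (R : ℕ) : {a : Fin d → ℤ | nd a i ≤ R}.Finite := by
  apply Set.Finite.subset (ballF i R).finite_toSet
  intro a ha
  simpa [mem_ballF] using ha

end Stab17

namespace Stab17

variable {d : ℕ} {A : Type}

/-- Bundled context for the proof. -/
structure Ctx (d : ℕ) (A : Type) where
  X : Set ((Fin d → ℤ) → A)
  F : ((Fin d → ℤ) → A) → ((Fin d → ℤ) → A)
  c₀ : ℕ
  ρ : ℕ
  hρ : 1 ≤ ρ
  U : Finset (Fin d → ℤ)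
  Pat : Set ({u // u ∈ U} → A)
  hXeq : X = {x | ∀ i : Fin d → ℤ, (fun u : {u // u ∈ U} => x (i + u.val)) ∈ Pat}
  hUρ : ∀ u ∈ U, ∀ j, (u j).natAbs ≤ ρ
  hloc : ∀ u v i, (∀ a, nd a i ≤ ρ → u a = v a) → F u i = F v i
  hfix : ∀ y ∈ X, F y = y
  hstab : ∀ y, (∃ x ∈ X, (diffSet x y).Finite) →
    ∃ t, F^[t] y ∈ X ∧ t ≤ c₀ * pdist X y + c₀

variable (C : Ctx d A)

lemma Ctx.hlocIter (t : ℕ) (u v : (Fin d → ℤ) → A) (i : Fin d → ℤ)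
    (h : ∀ a, nd a i ≤ C.ρ * t → u a = v a) : C.F^[t] u i = C.F^[t] v i := by
  induction t generalizing u v i with
  | zero => exact h i (by simp [nd_self])
  | succ t ih =>
    rw [Function.iterate_succ_apply, Function.iterate_succ_apply]
    apply ih
    intro a ha
    apply C.hloc
    intro b hb
    apply h
    calc nd b i ≤ nd b a + nd a i := nd_triangle _ _ _
      _ ≤ C.ρ + C.ρ * t := Nat.add_le_add hb ha
      _ = C.ρ * (t + 1) := by ring

lemma Ctx.fixIter {y} (hy : y ∈ C.X) (t : ℕ) : C.F^[t] y = y := by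
  induction t with
  | zero => rfl
  | succ t ih => rw [Function.iterate_succ_apply, C.hfix y hy, ih]

/-- stays in X once it entered. -/
lemma Ctx.stabIterX {y : (Fin d → ℤ) → A} (h : ∃ x ∈ C.X, (diffSet x y).Finite)
    {T : ℕ} (hT : C.c₀ * pdist C.X y + C.c₀ ≤ T) : C.F^[T] y ∈ C.X := by
  obtain ⟨t, htX, ht⟩ := C.hstab y h
  have : C.F^[T] y = C.F^[t] y := by
    have : T = (T - t) + t := by omega
    rw [this, Function.iterate_add_apply, C.fixIter htX]
  rw [this]; exact htX

/-- if the difference set with some `w ∈ X` is in a ball of radius `R`, then after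
`c₀*(2R+1)+c₀` steps we are in `X`. -/
lemma Ctx.stab_ball {w y : (Fin d → ℤ) → A} {i₀ : Fin d → ℤ} {R : ℕ}
    (hw : w ∈ C.X) (hsub : diffSet w y ⊆ {a | nd a i₀ ≤ R})
    {T : ℕ} (hT : C.c₀ * (2 * R + 1) + C.c₀ ≤ T) : C.F^[T] y ∈ C.X := by
  have hfin : (diffSet w y).Finite := (finite_ball i₀ R).subset hsub
  have hprem : ∃ x ∈ C.X, (diffSet x y).Finite := ⟨w, hw, hfin⟩
  apply C.stabIterX hprem
  have hdiam : diamd (diffSet w y) ≤ 2 * R + 1 := by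
    apply Nat.sInf_le
    refine ⟨fun j => i₀ j - R, ?_⟩
    intro a ha j
    have : nd a i₀ ≤ R := hsub ha
    rw [nd_le_iff] at this
    have := this j
    push_cast
    omega
  have hpd : pdist C.X y ≤ 2 * R + 1 := by
    have : diamd (diffSet w y) ∈ {n : ℕ | ∃ x ∈ C.X, (diffSet x y).Finite ∧
        diamd (diffSet x y) = n} := ⟨w, hw, hfin, rfl⟩
    exact le_trans (Nat.sInf_le this) hdiam
  have := Nat.mul_le_mul_left C.c₀ hpd
  omega

/-- window criterion for membership in X -/
lemma Ctx.memX {c : (Fin d → ℤ) → A}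
    (h : ∀ i, ∃ w ∈ C.X, ∀ a, nd a i ≤ C.ρ → c a = w a) : c ∈ C.X := by
  rw [C.hXeq]
  intro i
  obtain ⟨w, hw, hagree⟩ := h i
  have : (fun u : {u // u ∈ C.U} => c (i + u.val)) =
      (fun u : {u // u ∈ C.U} => w (i + u.val)) := by
    funext u
    apply hagree
    rw [nd_le_iff]
    intro j
    have := C.hUρ u.val u.property j
    simp only [Pi.add_apply]
    omega
  rw [this]
  have hwX := C.hXeq ▸ hw
  exact hwX i

end Stab17

namespace Stab17

variable {d : ℕ} {A : Type}

def kap (C : Ctx d A) : ℕ := 8 * (C.ρ + 1) * ((C.c₀ + 1) * (2 * C.ρ + 13) + 6)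

/-- parameters: `prm C k = (σ_k, D_k)`. -/
def prm (C : Ctx d A) : ℕ → ℕ × ℕ
  | 0 => (0, 2 * kap C ^ 2 + 1)
  | k+1 =>
    let s := (prm C k).1
    let D := (prm C k).2
    let r := 4 * D + 1
    let b := 2 * (r + C.ρ * s) + 1
    let t := C.c₀ * b + C.c₀ + 1
    (s + t, 8 * (C.ρ + 1) * (s + t + r + 1))

def σk (C : Ctx d A) (k : ℕ) : ℕ := (prm C k).1
def Dk (C : Ctx d A) (k : ℕ) : ℕ := (prm C k).2
/-- r_{k+1} -/
def rS (C : Ctx d A) (k : ℕ) : ℕ := 4 * Dk C k + 1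
def bS (C : Ctx d A) (k : ℕ) : ℕ := 2 * (rS C k + C.ρ * σk C k) + 1
def tS (C : Ctx d A) (k : ℕ) : ℕ := C.c₀ * bS C k + C.c₀ + 1

variable (C : Ctx d A)

lemma σk_zero : σk C 0 = 0 := rfl
lemma Dk_zero : Dk C 0 = 2 * kap C ^ 2 + 1 := rfl

lemma σk_succ (k : ℕ) : σk C (k + 1) = σk C k + tS C k := rfl

lemma Dk_succ (k : ℕ) : Dk C (k + 1) = 8 * (C.ρ + 1) * (σk C (k + 1) + rS C k + 1) := rfl

lemma kap_pos : 1 ≤ kap C := by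
  unfold kap
  have : 0 < 8 * (C.ρ + 1) * ((C.c₀ + 1) * (2 * C.ρ + 13) + 6) := by positivity
  omega

lemma tS_pos (k : ℕ) : 1 ≤ tS C k := by unfold tS; omega

lemma σk_lt_succ (k : ℕ) : σk C k < σk C (k + 1) := by
  have := tS_pos C k; rw [σk_succ]; omega

lemma σk_mono {k l : ℕ} (h : k ≤ l) : σk C k ≤ σk C l :=
  monotone_nat_of_le_succ (fun n => (σk_lt_succ C n).le) h

lemma le_σk (k : ℕ) : k ≤ σk C k := by
  induction k with
  | zero => simp [σk_zero]
  | succ k ih => have := tS_pos C k; rw [σk_succ]; omega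

lemma Dk_pos (k : ℕ) : 1 ≤ Dk C k := by
  cases k with
  | zero => rw [Dk_zero]; omega
  | succ k =>
    rw [Dk_succ]
    have : 0 < 8 * (C.ρ + 1) * (σk C (k + 1) + rS C k + 1) := by positivity
    omega

lemma Dk_succ_ge (k : ℕ) : 32 * Dk C k ≤ Dk C (k + 1) := by
  rw [Dk_succ]
  have : rS C k = 4 * Dk C k + 1 := rfl
  nlinarith [C.hρ, Nat.zero_le (σk C (k+1))]

lemma Dk_mono {k l : ℕ} (h : k ≤ l) : Dk C k ≤ Dk C l := by
  refine monotone_nat_of_le_succ (fun n => ?_) h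
  have := Dk_succ_ge C n
  omega

lemma Dk_ge_D0 (k : ℕ) : 2 * kap C ^ 2 + 1 ≤ Dk C k := by
  have := Dk_mono C (Nat.zero_le k); rw [Dk_zero] at this; omega

lemma σk_le_Dk (k : ℕ) : σk C k ≤ Dk C k := by
  cases k with
  | zero => simp [σk_zero]
  | succ k =>
    rw [Dk_succ]
    nlinarith [C.hρ, Nat.zero_le (rS C k), Nat.zero_le (σk C (k+1))]

lemma Dk_growth (k : ℕ) : Dk C (k + 1) ≤ kap C * Dk C k := by
  have hs : σk C k ≤ Dk C k := σk_le_Dk C k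
  have hD : 1 ≤ Dk C k := Dk_pos C k
  rw [Dk_succ, σk_succ]
  have hr : rS C k = 4 * Dk C k + 1 := rfl
  have hb : bS C k = 2 * (rS C k + C.ρ * σk C k) + 1 := rfl
  have ht : tS C k = C.c₀ * bS C k + C.c₀ + 1 := rfl
  have hbb : bS C k ≤ (2 * C.ρ + 11) * Dk C k := by
    rw [hb, hr]
    nlinarith [Nat.mul_le_mul_left C.ρ hs]
  have htt : tS C k ≤ (C.c₀ + 1) * (2 * C.ρ + 12) * Dk C k := by
    rw [ht]
    nlinarith [Nat.mul_le_mul_left C.c₀ hbb]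
  unfold kap
  rw [mul_assoc (8 * (C.ρ + 1))]
  apply Nat.mul_le_mul_left
  have e1 : ((C.c₀ + 1) * (2 * C.ρ + 13) + 6) * Dk C k =
      (C.c₀ + 1) * (2 * C.ρ + 12) * Dk C k + (C.c₀ + 1) * Dk C k + 6 * Dk C k := by ring
  have h2 : Dk C k ≤ (C.c₀ + 1) * Dk C k := Nat.le_mul_of_pos_left _ (by omega)
  have h3 : rS C k + 1 ≤ 6 * Dk C k := by
    have : rS C k = 4 * Dk C k + 1 := rfl
    omega
  omega

lemma sep_ineq (k : ℕ) : 3 * rS C k + 2 * C.ρ * σk C (k + 1) + 2 * C.ρ ≤ Dk C (k + 1) := by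
  rw [Dk_succ]
  nlinarith [C.hρ, Nat.zero_le (σk C (k+1)), Nat.zero_le (rS C k)]

lemma ρσ_le_Dk (k : ℕ) : C.ρ * σk C (k + 1) ≤ Dk C (k + 1) := by
  rw [Dk_succ]
  nlinarith [Nat.zero_le (rS C k)]

/-- ball cardinality bound -/
def Bc (C : Ctx d A) (R : ℕ) : ℕ := (2 * R + 1) ^ d

lemma Bc_mono {R R' : ℕ} (h : R ≤ R') : Bc C R ≤ Bc C R' := by
  unfold Bc; exact Nat.pow_le_pow_left (by omega) d

lemma Bc_pos (R : ℕ) : 1 ≤ Bc C R := Nat.one_le_pow _ _ (by omega)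

lemma Bc_cube (k : ℕ) : Bc C (Dk C (k + 2)) ^ 2 ≤ Bc C (Dk C (k + 1)) ^ 3 := by
  unfold Bc
  rw [← pow_mul, ← pow_mul, mul_comm d 2, mul_comm d 3, pow_mul, pow_mul]
  apply Nat.pow_le_pow_left
  have h1 : Dk C (k + 2) ≤ kap C * Dk C (k + 1) := Dk_growth C (k + 1)
  have h2 : 2 * kap C ^ 2 + 1 ≤ Dk C (k + 1) := Dk_ge_D0 C (k + 1)
  have h3 : 1 ≤ kap C := kap_pos C
  have h4 : 1 ≤ Dk C (k + 1) := Dk_pos C (k + 1)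
  calc (2 * Dk C (k + 2) + 1) ^ 2 ≤ (3 * (kap C * Dk C (k + 1))) ^ 2 := by
        apply Nat.pow_le_pow_left; nlinarith
    _ ≤ (2 * Dk C (k + 1) + 1) ^ 3 := by nlinarith
  
def Mw (C : Ctx d A) : ℕ → ℕ
  | 0 => 1
  | k+1 => Bc C (Dk C (k + 1)) * Mw C k ^ 2

def Φ (C : Ctx d A) (k : ℕ) : ℕ := Bc C (Dk C (k + 1)) ^ 2 * Mw C k

def Bconst (C : Ctx d A) : ℕ := Bc C (Dk C 1) ^ 2

lemma Mw_pos (k : ℕ) : 1 ≤ Mw C k := by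
  induction k with
  | zero => exact le_refl 1
  | succ k ih =>
    have := Bc_pos C (Dk C (k+1))
    show 1 ≤ Bc C (Dk C (k + 1)) * Mw C k ^ 2
    nlinarith

lemma Φ_le (k : ℕ) : Φ C k ≤ Bconst C ^ 2 ^ k := by
  induction k with
  | zero => simp [Φ, Bconst, Mw]
  | succ k ih =>
    have h1 : Φ C (k + 1) ≤ Φ C k ^ 2 := by
      show Bc C (Dk C (k + 2)) ^ 2 * (Bc C (Dk C (k + 1)) * Mw C k ^ 2) ≤
        (Bc C (Dk C (k + 1)) ^ 2 * Mw C k) ^ 2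
      have := Bc_cube C k
      have := Bc_pos C (Dk C (k+1))
      have := Mw_pos C k
      nlinarith
    calc Φ C (k + 1) ≤ Φ C k ^ 2 := h1
      _ ≤ (Bconst C ^ 2 ^ k) ^ 2 := Nat.pow_le_pow_left ih 2
      _ = Bconst C ^ 2 ^ (k + 1) := by rw [← pow_mul, pow_succ]

lemma Mw_le_Φ (k : ℕ) : Mw C k ≤ Φ C k := by
  unfold Φ
  exact Nat.le_mul_of_pos_left _ (pow_pos (by have := Bc_pos C (Dk C (k+1)); omega) 2)

def RR (C : Ctx d A) : ℕ → ℕ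
  | 0 => 0
  | k+1 => RR C k + Dk C (k + 1)

lemma RR_le (k : ℕ) : RR C k ≤ 2 * Dk C k := by
  induction k with
  | zero => simp [RR]
  | succ k ih =>
    have := Dk_succ_ge C k
    show RR C k + Dk C (k + 1) ≤ 2 * Dk C (k + 1)
    omega

lemma rS_gt_2RR (k : ℕ) : 2 * RR C k < rS C k := by
  have := RR_le C k
  show 2 * RR C k < 4 * Dk C k + 1
  omega

lemma stab_time (k : ℕ) : C.c₀ * (2 * (rS C k + C.ρ * σk C k) + 1) + C.c₀ ≤ tS C k := by
  unfold tS bS; omega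

end Stab17

namespace Stab17

variable {d : ℕ} {A : Type}

/-- surviving errors at the beginning of level `k`. -/
def EsF (C : Ctx d A) (E : Set (Fin d → ℤ)) : ℕ → Set (Fin d → ℤ)
  | 0 => E
  | k+1 => {i | i ∈ EsF C E k ∧ ∀ i',
      (i' ∈ EsF C E k ∧ ∀ j ∈ EsF C E k, nd j i' ≤ Dk C (k+1) → nd j i' ≤ rS C k) →
      ¬ nd i i' ≤ rS C k}

def lonelyP (C : Ctx d A) (E : Set (Fin d → ℤ)) (k : ℕ) (i' : Fin d → ℤ) : Prop :=
  i' ∈ EsF C E k ∧ ∀ j ∈ EsF C E k, nd j i' ≤ Dk C (k+1) → nd j i' ≤ rS C k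

def clus (C : Ctx d A) (E : Set (Fin d → ℤ)) (k : ℕ) (i' : Fin d → ℤ) : Set (Fin d → ℤ) :=
  {j | j ∈ EsF C E k ∧ nd j i' ≤ rS C k}

def Islands (C : Ctx d A) (E : Set (Fin d → ℤ)) (k : ℕ) : Set (Set (Fin d → ℤ)) :=
  {S | ∃ i', lonelyP C E k i' ∧ S = clus C E k i'}

variable (C : Ctx d A) (E : Set (Fin d → ℤ))

lemma mem_EsF_succ {i : Fin d → ℤ} {k : ℕ} :
    i ∈ EsF C E (k+1) ↔ i ∈ EsF C E k ∧ ∀ i', lonelyP C E k i' → i ∉ clus C E k i' := by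
  show (i ∈ EsF C E k ∧ _) ↔ _
  unfold lonelyP clus
  constructor
  · rintro ⟨h1, h2⟩
    refine ⟨h1, fun i' hl hc => h2 i' hl hc.2⟩
  · rintro ⟨h1, h2⟩
    refine ⟨h1, fun i' hl hnd => h2 i' hl ⟨h1, hnd⟩⟩

lemma EsF_mono_lvl {k : ℕ} : EsF C E (k+1) ⊆ EsF C E k := fun _ h => ((mem_EsF_succ C E).mp h).1

lemma island_sub {S : Set (Fin d → ℤ)} {k : ℕ} (hS : S ∈ Islands C E k) : S ⊆ EsF C E k := by
  obtain ⟨i', _, rfl⟩ := hS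
  exact fun j hj => hj.1

lemma island_nonempty {S : Set (Fin d → ℤ)} {k : ℕ} (hS : S ∈ Islands C E k) : S.Nonempty := by
  obtain ⟨i', hl, rfl⟩ := hS
  exact ⟨i', hl.1, by simp [nd_self]⟩

lemma island_ball {S : Set (Fin d → ℤ)} {k : ℕ} (hS : S ∈ Islands C E k) :
    ∃ i₀, ∀ a ∈ S, nd a i₀ ≤ rS C k := by
  obtain ⟨i', _, rfl⟩ := hS
  exact ⟨i', fun a ha => ha.2⟩

lemma island_sep {S S' : Set (Fin d → ℤ)} {k : ℕ}
    (hS : S ∈ Islands C E k) (hS' : S' ∈ Islands C E k)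
    {a a' : Fin d → ℤ} (ha : a ∈ S) (ha' : a' ∈ S')
    (hnd : nd a a' ≤ 2 * C.ρ * σk C (k+1) + 2 * C.ρ) : S = S' := by
  obtain ⟨i, hi, rfl⟩ := hS
  obtain ⟨i', hi', rfl⟩ := hS'
  have hii' : nd i i' + rS C k ≤ Dk C (k+1) := by
    have t1 : nd i i' ≤ nd i a + nd a a' + nd a' i' := by
      calc nd i i' ≤ nd i a + nd a i' := nd_triangle _ _ _
        _ ≤ nd i a + (nd a a' + nd a' i') := by
            have := nd_triangle a a' i'; omega
        _ = _ := by ring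
    have h1 : nd i a = nd a i := nd_symm _ _
    have h2 : nd a i ≤ rS C k := ha.2
    have h3 : nd a' i' ≤ rS C k := ha'.2
    have := sep_ineq C k
    omega
  have hi'i : nd i' i + rS C k ≤ Dk C (k+1) := by rw [nd_symm]; exact hii'
  ext j
  constructor
  · rintro ⟨hj, hjnd⟩
    refine ⟨hj, hi'.2 j hj ?_⟩
    have := nd_triangle j i i'
    omega
  · rintro ⟨hj, hjnd⟩
    refine ⟨hj, hi.2 j hj ?_⟩
    have := nd_triangle j i' i
    rw [nd_symm i' i] at this
    omega

lemma EsF_succ_no_island {i : Fin d → ℤ} {k : ℕ} (h : i ∈ EsF C E (k+1)) :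
    ∀ S ∈ Islands C E k, i ∉ S := by
  rintro S ⟨i', hl, rfl⟩
  exact ((mem_EsF_succ C E).mp h).2 i' hl

lemma EsF_escape {i : Fin d → ℤ} {k : ℕ} (h : i ∈ EsF C E k)
    (hno : ∀ S ∈ Islands C E k, i ∉ S) :
    ∃ j, j ∈ EsF C E k ∧ rS C k < nd j i ∧ nd j i ≤ Dk C (k+1) := by
  by_contra hc
  push_neg at hc
  have hl : lonelyP C E k i := by
    refine ⟨h, fun j hj hjD => ?_⟩
    by_contra hr
    have := hc j hj (by omega)
    omega
  exact hno (clus C E k i) ⟨i, hl, rfl⟩ ⟨h, by simp [nd_self]⟩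

lemma EsF_persist {i : Fin d → ℤ} (hi : i ∈ E)
    (hno : ∀ k, ∀ S ∈ Islands C E k, i ∉ S) : ∀ k, i ∈ EsF C E k := by
  intro k
  induction k with
  | zero => exact hi
  | succ k ih =>
    rw [mem_EsF_succ]
    exact ⟨ih, fun i' hl hc => hno k _ ⟨i', hl, rfl⟩ hc⟩

/-- witness families -/
noncomputable def Wit (C : Ctx d A) : ℕ → (Fin d → ℤ) → Finset (Finset (Fin d → ℤ))
  | 0, i => {{i}}
  | k+1, i => ((ballF i (Dk C (k+1))).filter (fun j => rS C k < nd j i)).biUnion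
      (fun j => (Wit C k i).biUnion (fun W1 => (Wit C k j).image (fun W2 => W1 ∪ W2)))

lemma Wit_spec {k : ℕ} {i : Fin d → ℤ} :
    ∀ W ∈ Wit C k i, W.card = 2 ^ k ∧ ∀ a ∈ W, nd a i ≤ RR C k := by
  induction k generalizing i with
  | zero =>
    intro W hW
    simp only [Wit, Finset.mem_singleton] at hW
    subst hW
    constructor
    · simp
    · intro a ha
      simp only [Finset.mem_singleton] at ha
      subst ha
      simp [nd_self, RR]
  | succ k ih =>
    intro W hW
    simp only [Wit, Finset.mem_biUnion, Finset.mem_filter, Finset.mem_image] at hW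
    obtain ⟨j, ⟨hjball, hjfar⟩, W1, hW1, W2, hW2, rfl⟩ := hW
    have hjD : nd j i ≤ Dk C (k+1) := mem_ballF.mp hjball
    obtain ⟨hc1, hr1⟩ := ih W1 hW1
    obtain ⟨hc2, hr2⟩ := ih W2 hW2
    have hdisj : Disjoint W1 W2 := by
      rw [Finset.disjoint_left]
      intro a ha1 ha2
      have h1 := hr1 a ha1
      have h2 := hr2 a ha2
      have h3 := nd_triangle j a i
      have h4 : nd j a = nd a j := nd_symm _ _
      have := rS_gt_2RR C k
      omega
    constructor
    · rw [Finset.card_union_of_disjoint hdisj, hc1, hc2]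
      ring
    · intro a ha
      rcases Finset.mem_union.mp ha with h | h
      · have := hr1 a h
        show nd a i ≤ RR C k + Dk C (k+1)
        omega
      · have := hr2 a h
        have := nd_triangle a j i
        show nd a i ≤ RR C k + Dk C (k+1)
        omega

lemma Wit_card {k : ℕ} {i : Fin d → ℤ} : (Wit C k i).card ≤ Mw C k := by
  induction k generalizing i with
  | zero => simp [Wit, Mw]
  | succ k ih =>
    show (Finset.biUnion _ _).card ≤ Bc C (Dk C (k+1)) * Mw C k ^ 2
    calc (Finset.biUnion _ _).card
        ≤ ∑ j ∈ (ballF i (Dk C (k+1))).filter (fun j => rS C k < nd j i),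
            ((Wit C k i).biUnion (fun W1 => (Wit C k j).image (fun W2 => W1 ∪ W2))).card :=
          Finset.card_biUnion_le
      _ ≤ ∑ j ∈ (ballF i (Dk C (k+1))).filter (fun j => rS C k < nd j i),
            Mw C k ^ 2 := by
          apply Finset.sum_le_sum
          intro j _
          calc ((Wit C k i).biUnion _).card
              ≤ ∑ W1 ∈ Wit C k i, ((Wit C k j).image (fun W2 => W1 ∪ W2)).card :=
                Finset.card_biUnion_le
            _ ≤ ∑ _W1 ∈ Wit C k i, Mw C k := by
                apply Finset.sum_le_sum
                intro W1 _
                exact le_trans Finset.card_image_le ih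
            _ = (Wit C k i).card * Mw C k := by
                rw [Finset.sum_const, smul_eq_mul]
            _ ≤ Mw C k * Mw C k := Nat.mul_le_mul_right _ ih
            _ = Mw C k ^ 2 := by ring
      _ = ((ballF i (Dk C (k+1))).filter (fun j => rS C k < nd j i)).card * Mw C k ^ 2 := by
          rw [Finset.sum_const, smul_eq_mul]
      _ ≤ Bc C (Dk C (k+1)) * Mw C k ^ 2 := by
          apply Nat.mul_le_mul_right
          calc ((ballF i (Dk C (k+1))).filter _).card ≤ (ballF i (Dk C (k+1))).card :=
              Finset.card_filter_le _ _
            _ = Bc C (Dk C (k+1)) := card_ballF _ _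

lemma Wit_witness {k : ℕ} {i : Fin d → ℤ} (h : i ∈ EsF C E k) :
    ∃ W ∈ Wit C k i, ∀ a ∈ W, a ∈ E := by
  induction k generalizing i with
  | zero =>
    refine ⟨{i}, by simp [Wit], ?_⟩
    intro a ha
    simp only [Finset.mem_singleton] at ha
    subst ha
    exact h
  | succ k ih =>
    have hi : i ∈ EsF C E k := EsF_mono_lvl C E h
    obtain ⟨j, hj, hjfar, hjD⟩ := EsF_escape C E hi (EsF_succ_no_island C E h)
    obtain ⟨W1, hW1, hW1E⟩ := ih hi
    obtain ⟨W2, hW2, hW2E⟩ := ih hj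
    refine ⟨W1 ∪ W2, ?_, ?_⟩
    · simp only [Wit, Finset.mem_biUnion, Finset.mem_filter, Finset.mem_image]
      exact ⟨j, ⟨mem_ballF.mpr hjD, hjfar⟩, W1, hW1, W2, hW2, rfl⟩
    · intro a ha
      rcases Finset.mem_union.mp ha with h' | h'
      · exact hW1E a h'
      · exact hW2E a h'

end Stab17

namespace Stab17

variable {d : ℕ} {A : Type}

def Eset (x z : (Fin d → ℤ) → A) : Set (Fin d → ℤ) := {i | z i ≠ x i}

def patch (S : Set (Fin d → ℤ)) (R : ℕ) : Set (Fin d → ℤ) := {j | ∃ a ∈ S, nd j a ≤ R}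

open Classical in
noncomputable def ySf (C : Ctx d A) (z : (Fin d → ℤ) → A) (k : ℕ)
    (c : (Fin d → ℤ) → A) (S : Set (Fin d → ℤ)) : (Fin d → ℤ) → A :=
  fun j => if j ∈ patch S (C.ρ * σk C k) then C.F^[σk C k] z j else c j

open Classical in
noncomputable def bg (C : Ctx d A) (x z : (Fin d → ℤ) → A) : ℕ → (Fin d → ℤ) → A
  | 0 => x
  | k+1 => fun i =>
      if h : ∃ S, S ∈ Islands C (Eset x z) k ∧ i ∈ patch S (C.ρ * σk C (k+1)) then
        C.F^[tS C k] (ySf C z k (bg C x z k) h.choose) i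
      else bg C x z k i

variable (C : Ctx d A) (x z : (Fin d → ℤ) → A)

lemma ρσ_succ (k : ℕ) : C.ρ * σk C (k+1) = C.ρ * σk C k + C.ρ * tS C k := by
  rw [σk_succ, Nat.mul_add]

/-- the healed island patch value -/
noncomputable def wS (k : ℕ) (S : Set (Fin d → ℤ)) : (Fin d → ℤ) → A :=
  C.F^[tS C k] (ySf C z k (bg C x z k) S)

lemma ySf_diff {k : ℕ} {c : (Fin d → ℤ) → A} {S : Set (Fin d → ℤ)} :
    diffSet c (ySf C z k c S) ⊆ patch S (C.ρ * σk C k) := by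
  intro j hj
  by_contra hp
  apply hj
  show c j = ySf C z k c S j
  unfold ySf
  rw [if_neg hp]

lemma wS_mem_X {k : ℕ} {S : Set (Fin d → ℤ)} (hS : S ∈ Islands C (Eset x z) k)
    (hc : bg C x z k ∈ C.X) : wS C x z k S ∈ C.X := by
  obtain ⟨i₀, hi₀⟩ := island_ball C (Eset x z) hS
  apply C.stab_ball hc (i₀ := i₀) (R := rS C k + C.ρ * σk C k)
  · intro j hj
    obtain ⟨a, haS, hja⟩ := ySf_diff C z hj
    have h1 := hi₀ a haS
    have := nd_triangle j a i₀
    show nd j i₀ ≤ _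
    omega
  · exact stab_time C k

lemma wS_eq_outside {k : ℕ} {S : Set (Fin d → ℤ)} {i : Fin d → ℤ}
    (hc : bg C x z k ∈ C.X) (hout : i ∉ patch S (C.ρ * σk C (k+1))) :
    wS C x z k S i = bg C x z k i := by
  have : wS C x z k S i = C.F^[tS C k] (bg C x z k) i := by
    apply C.hlocIter
    intro a ha
    show ySf C z k (bg C x z k) S a = bg C x z k a
    unfold ySf
    rw [if_neg]
    intro ⟨a', ha'S, haa'⟩
    apply hout
    refine ⟨a', ha'S, ?_⟩
    have t1 := nd_triangle i a a'
    have t2 : nd i a = nd a i := nd_symm _ _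
    rw [ρσ_succ]
    omega
  rw [this, C.fixIter hc]

lemma bg_succ_patch {k : ℕ} {S : Set (Fin d → ℤ)} {i : Fin d → ℤ}
    (hS : S ∈ Islands C (Eset x z) k) (hi : i ∈ patch S (C.ρ * σk C (k+1))) :
    bg C x z (k+1) i = wS C x z k S i := by
  have h : ∃ S', S' ∈ Islands C (Eset x z) k ∧ i ∈ patch S' (C.ρ * σk C (k+1)) :=
    ⟨S, hS, hi⟩
  simp only [bg]
  rw [dif_pos h]
  have hch : h.choose = S := by
    obtain ⟨hS', hi'⟩ := h.choose_spec
    obtain ⟨a', ha'S, ha'⟩ := hi'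
    obtain ⟨a, haS, ha⟩ := hi
    apply island_sep C (Eset x z) hS' hS ha'S haS
    have h1 := nd_triangle a' i a
    have h2 : nd a' i = nd i a' := nd_symm _ _
    have e2 : 2 * C.ρ * σk C (k+1) = C.ρ * σk C (k+1) + C.ρ * σk C (k+1) := by ring
    omega
  rw [hch]
  rfl

lemma bg_succ_nopatch {k : ℕ} {i : Fin d → ℤ}
    (hno : ∀ S ∈ Islands C (Eset x z) k, i ∉ patch S (C.ρ * σk C (k+1))) :
    bg C x z (k+1) i = bg C x z k i := by
  simp only [bg]
  rw [dif_neg]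
  rintro ⟨S, hS, hi⟩
  exact hno S hS hi

theorem main_ind (hx : x ∈ C.X)
    (hE1 : ∀ i ∈ Eset x z, ∃ l, ∃ S ∈ Islands C (Eset x z) l, i ∈ S) (k : ℕ) :
    bg C x z k ∈ C.X ∧
    (∀ i, bg C x z k i ≠ x i → ∃ l, l < k ∧ ∃ S ∈ Islands C (Eset x z) l,
        i ∈ patch S (C.ρ * σk C (l+1))) ∧
    (∀ i, (∀ l, k ≤ l → ∀ S ∈ Islands C (Eset x z) l, ∀ a ∈ S,
        C.ρ * σk C k < nd i a) → C.F^[σk C k] z i = bg C x z k i) := by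
  induction k with
  | zero =>
    refine ⟨hx, ?_, ?_⟩
    · intro i hi
      exact absurd rfl hi
    · intro i hyp
      show z i = x i
      by_contra hne
      obtain ⟨l, S, hS, hiS⟩ := hE1 i hne
      have := hyp l (Nat.zero_le l) S hS i hiS
      simp [nd_self, σk_zero] at this
  | succ k ih =>
    obtain ⟨h1, h2, h3⟩ := ih
    have key3 : ∀ i, (∀ l, k + 1 ≤ l → ∀ S ∈ Islands C (Eset x z) l, ∀ a ∈ S,
        C.ρ * σk C (k+1) < nd i a) → C.F^[σk C (k+1)] z i = bg C x z (k+1) i := by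
      intro i hyp
      by_cases hnear : ∃ S ∈ Islands C (Eset x z) k, ∃ a ∈ S, nd i a ≤ C.ρ * σk C (k+1)
      · obtain ⟨S, hS, a, haS, ha⟩ := hnear
        have hagree : ∀ j, nd j i ≤ C.ρ * tS C k →
            C.F^[σk C k] z j = ySf C z k (bg C x z k) S j := by
          intro j hj
          by_cases hjp : j ∈ patch S (C.ρ * σk C k)
          · show _ = ySf C z k (bg C x z k) S j
            unfold ySf
            rw [if_pos hjp]
          · have : ySf C z k (bg C x z k) S j = bg C x z k j := by
              unfold ySf; rw [if_neg hjp]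
            rw [this]
            apply h3 j
            intro l hl S'' hS'' a'' ha''
            by_contra hc
            push_neg at hc
            rcases Nat.eq_or_lt_of_le hl with hlk | hlk
            · -- l = k
              subst hlk
              by_cases hSS : S'' = S
              · subst hSS
                exact hjp ⟨a'', ha'', by omega⟩
              · apply hSS
                apply island_sep C (Eset x z) hS'' hS ha'' haS
                have t1 := nd_triangle a'' j i
                have t2 := nd_triangle a'' i a
                have t3 : nd a'' j = nd j a'' := nd_symm _ _
                have t4 : nd a'' i = nd i a'' := nd_symm _ _
                have t5 := nd_triangle a'' j a
                have t6 := nd_triangle j i a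
                have e := ρσ_succ C k
                have t7 : nd a'' a = nd a a'' := nd_symm _ _
                have e2 : 2 * C.ρ * σk C (k+1) = C.ρ * σk C (k+1) + C.ρ * σk C (k+1) := by
                  ring
                omega
            · -- l ≥ k+1
              have := hyp l hlk S'' hS'' a'' ha''
              have t1 := nd_triangle i j a''
              have t2 : nd i j = nd j i := nd_symm _ _
              have e := ρσ_succ C k
              omega
        have hiter : C.F^[σk C (k+1)] z i = C.F^[tS C k] (C.F^[σk C k] z) i := by
          rw [σk_succ, Nat.add_comm, Function.iterate_add_apply]
        rw [hiter]
        have := C.hlocIter (tS C k) (C.F^[σk C k] z) (ySf C z k (bg C x z k) S) i hagree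
        rw [this]
        have : i ∈ patch S (C.ρ * σk C (k+1)) := ⟨a, haS, ha⟩
        rw [bg_succ_patch C x z hS this]
        rfl
      · push_neg at hnear
        have hagree : ∀ j, nd j i ≤ C.ρ * tS C k →
            C.F^[σk C k] z j = bg C x z k j := by
          intro j hj
          apply h3 j
          intro l hl S'' hS'' a'' ha''
          by_contra hc
          push_neg at hc
          have t1 := nd_triangle i j a''
          have t2 : nd i j = nd j i := nd_symm _ _
          have e := ρσ_succ C k
          rcases Nat.eq_or_lt_of_le hl with hlk | hlk
          · subst hlk
            have := hnear S'' hS'' a'' ha''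
            omega
          · have := hyp l hlk S'' hS'' a'' ha''
            omega
        have hiter : C.F^[σk C (k+1)] z i = C.F^[tS C k] (C.F^[σk C k] z) i := by
          rw [σk_succ, Nat.add_comm, Function.iterate_add_apply]
        rw [hiter]
        have := C.hlocIter (tS C k) (C.F^[σk C k] z) (bg C x z k) i hagree
        rw [this, C.fixIter h1]
        rw [bg_succ_nopatch C x z]
        intro S hS hip
        obtain ⟨a, haS, ha⟩ := hip
        have := hnear S hS a haS
        omega
    refine ⟨?_, ?_, key3⟩
    · -- bg (k+1) ∈ X
      apply C.memX
      intro m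
      by_cases hm : ∃ S ∈ Islands C (Eset x z) k, ∃ a ∈ S,
          nd m a ≤ C.ρ * σk C (k+1) + C.ρ
      · obtain ⟨S, hS, a, haS, ha⟩ := hm
        refine ⟨wS C x z k S, wS_mem_X C x z hS h1, ?_⟩
        intro j hj
        by_cases hjp : j ∈ patch S (C.ρ * σk C (k+1))
        · exact bg_succ_patch C x z hS hjp
        · rw [wS_eq_outside C x z h1 hjp]
          apply bg_succ_nopatch C x z
          intro S' hS' hjp'
          by_cases hSS : S' = S
          · exact hjp (hSS ▸ hjp')
          · obtain ⟨a', ha'S, ha'⟩ := hjp'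
            apply hSS
            apply island_sep C (Eset x z) hS' hS ha'S haS
            have t1 := nd_triangle a' j m
            have t2 := nd_triangle a' m a
            have t3 : nd a' j = nd j a' := nd_symm _ _
            have t4 := nd_triangle a' j a
            have t5 := nd_triangle j m a
            have t6 : nd a' a = nd a a' := nd_symm _ _
            have e2 : 2 * C.ρ * σk C (k+1) = C.ρ * σk C (k+1) + C.ρ * σk C (k+1) := by
              ring
            omega
      · push_neg at hm
        refine ⟨bg C x z k, h1, ?_⟩
        intro j hj
        apply bg_succ_nopatch C x z
        intro S hS hjp
        obtain ⟨a, haS, ha⟩ := hjp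
        have := hm S hS a haS
        have t1 := nd_triangle m j a
        have t2 : nd m j = nd j m := nd_symm _ _
        omega
    · -- difference from x localized
      intro i hi
      by_cases hip : ∃ S ∈ Islands C (Eset x z) k, i ∈ patch S (C.ρ * σk C (k+1))
      · obtain ⟨S, hS, hp⟩ := hip
        exact ⟨k, Nat.lt_succ_self k, S, hS, hp⟩
      · push_neg at hip
        rw [bg_succ_nopatch C x z hip] at hi
        obtain ⟨l, hl, rest⟩ := h2 i hi
        exact ⟨l, by omega, rest⟩

lemma bg_stable {i : Fin d → ℤ} {K : ℕ}
    (hK : ∀ l, K ≤ l → ∀ S ∈ Islands C (Eset x z) l, ∀ a ∈ S,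
      C.ρ * σk C (l+1) < nd i a) :
    ∀ k, K ≤ k → bg C x z k i = bg C x z K i := by
  intro k hk
  induction k with
  | zero =>
    have : K = 0 := by omega
    rw [this]
  | succ k ihk =>
    rcases Nat.eq_or_lt_of_le hk with h | h
    · rw [h]
    · have hk' : K ≤ k := by omega
      rw [← ihk hk']
      apply bg_succ_nopatch C x z
      intro S hS hip
      obtain ⟨a, haS, ha⟩ := hip
      have := hK k hk' S hS a haS
      omega

lemma conv (hx : x ∈ C.X)
    (hE1 : ∀ i ∈ Eset x z, ∃ l, ∃ S ∈ Islands C (Eset x z) l, i ∈ S)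
    {i : Fin d → ℤ} {K : ℕ}
    (hK : ∀ l, K ≤ l → ∀ S ∈ Islands C (Eset x z) l, ∀ a ∈ S,
      C.ρ * σk C (l+1) < nd i a) :
    ∀ t, σk C K ≤ t → C.F^[t] z i = bg C x z K i := by
  intro t ht
  set k := Nat.findGreatest (fun k => σk C k ≤ t) (t+1) with hkdef
  have hKt : K ≤ t + 1 := by
    have := le_σk C K
    omega
  have hKk : K ≤ k := Nat.le_findGreatest (P := fun k => σk C k ≤ t) hKt ht
  have hσk : σk C k ≤ t := Nat.findGreatest_spec (P := fun k => σk C k ≤ t) hKt ht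
  have hkt : k ≤ t := by
    have := le_σk C k
    omega
  have hnext : t < σk C (k+1) := by
    by_contra hcon
    push_neg at hcon
    have := Nat.findGreatest_is_greatest (show k < k+1 by omega) (show k+1 ≤ t+1 by omega)
    exact this hcon
  set s := t - σk C k with hsdef
  have hslt : s ≤ tS C k := by
    have := σk_succ C k
    omega
  obtain ⟨h1, h2, h3⟩ := main_ind C x z hx hE1 k
  have hagree : ∀ j, nd j i ≤ C.ρ * s → C.F^[σk C k] z j = bg C x z k j := by
    intro j hj
    apply h3 j
    intro l hl S hS a ha
    by_contra hc
    push_neg at hc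
    have hKl : K ≤ l := le_trans hKk hl
    have := hK l hKl S hS a ha
    have t1 := nd_triangle i j a
    have hm : σk C (k+1) ≤ σk C (l+1) := σk_mono C (by omega)
    have hm2 : C.ρ * σk C (k+1) ≤ C.ρ * σk C (l+1) := Nat.mul_le_mul_left _ hm
    have e := ρσ_succ C k
    have hss : C.ρ * s ≤ C.ρ * tS C k := Nat.mul_le_mul_left _ hslt
    have t2 : nd i j = nd j i := nd_symm _ _
    omega
  have hts : t = s + σk C k := by omega
  rw [hts, Function.iterate_add_apply]
  have := C.hlocIter s (C.F^[σk C k] z) (bg C x z k) i hagree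
  rw [this, C.fixIter h1, bg_stable C x z hK k hKk]

end Stab17

namespace Stab17

variable {d : ℕ} {A : Type}

def clearAt (C : Ctx d A) (E : Set (Fin d → ℤ)) (i : Fin d → ℤ) (K : ℕ) : Prop :=
  ∀ l, K ≤ l → ∀ S ∈ Islands C E l, ∀ a ∈ S, C.ρ * σk C (l+1) < nd i a

def GoodE (C : Ctx d A) (E : Set (Fin d → ℤ)) : Prop :=
  (∀ i ∈ E, ∃ l, ∃ S ∈ Islands C E l, i ∈ S) ∧ (∀ i, ∃ K, clearAt C E i K)

noncomputable def limCfg (C : Ctx d A) (x z : (Fin d → ℤ) → A)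
    (hg : GoodE C (Eset x z)) : (Fin d → ℤ) → A :=
  fun i => bg C x z (Classical.choose (hg.2 i)) i

variable (C : Ctx d A) (x z : (Fin d → ℤ) → A)

lemma clearAt_mono {E : Set (Fin d → ℤ)} {i : Fin d → ℤ} {K K' : ℕ}
    (h : clearAt C E i K) (hK : K ≤ K') : clearAt C E i K' :=
  fun l hl => h l (le_trans hK hl)

lemma limCfg_spec (hg : GoodE C (Eset x z)) (i : Fin d → ℤ) {K : ℕ}
    (hK : clearAt C (Eset x z) i K) : limCfg C x z hg i = bg C x z K i := by
  unfold limCfg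
  set Ki := Classical.choose (hg.2 i) with hKi
  have hKic : clearAt C (Eset x z) i Ki := Classical.choose_spec (hg.2 i)
  have h1 : bg C x z (max K Ki) i = bg C x z Ki i :=
    bg_stable C x z hKic _ (le_max_right _ _)
  have h2 : bg C x z (max K Ki) i = bg C x z K i :=
    bg_stable C x z hK _ (le_max_left _ _)
  rw [← h1, h2]

lemma limCfg_memX (hx : x ∈ C.X) (hg : GoodE C (Eset x z)) :
    limCfg C x z hg ∈ C.X := by
  apply C.memX
  intro m
  set Km := (ballF m C.ρ).sup (fun a => Classical.choose (hg.2 a)) with hKm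
  refine ⟨bg C x z Km, (main_ind C x z hx hg.1 Km).1, ?_⟩
  intro a ha
  have haK : Classical.choose (hg.2 a) ≤ Km :=
    Finset.le_sup (f := fun a => Classical.choose (hg.2 a)) (mem_ballF.mpr ha)
  exact limCfg_spec C x z hg a
    (clearAt_mono C (Classical.choose_spec (hg.2 a)) haK)

lemma limCfg_conv (hx : x ∈ C.X) (hg : GoodE C (Eset x z)) (i : Fin d → ℤ) :
    ∃ T, ∀ t, T ≤ t → C.F^[t] z i = limCfg C x z hg i := by
  obtain ⟨K, hK⟩ := hg.2 i
  refine ⟨σk C K, fun t ht => ?_⟩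
  rw [conv C x z hx hg.1 hK t ht, limCfg_spec C x z hg i hK]

lemma limCfg_diff (hx : x ∈ C.X) (hg : GoodE C (Eset x z)) (i : Fin d → ℤ)
    (hne : limCfg C x z hg i ≠ x i) :
    ∃ l, ∃ S ∈ Islands C (Eset x z) l, ∃ a ∈ S, nd i a ≤ C.ρ * σk C (l+1) := by
  obtain ⟨K, hK⟩ := hg.2 i
  rw [limCfg_spec C x z hg i hK] at hne
  obtain ⟨l, _, S, hS, a, haS, ha⟩ := (main_ind C x z hx hg.1 K).2.1 i hne
  exact ⟨l, S, hS, a, haS, ha⟩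

lemma notGood_cases {E : Set (Fin d → ℤ)} (h : ¬ GoodE C E) :
    (∃ i ∈ E, ∀ k, i ∈ EsF C E k) ∨
    (∃ i, ∀ K, ∃ l, K ≤ l ∧ ∃ S ∈ Islands C E l, ∃ a ∈ S, nd i a ≤ C.ρ * σk C (l+1)) := by
  rw [GoodE] at h
  rw [not_and_or] at h
  rcases h with h | h
  · left
    push_neg at h
    obtain ⟨i, hiE, hno⟩ := h
    refine ⟨i, hiE, EsF_persist C E hiE ?_⟩
    intro k S hS hiS
    exact hno k S hS hiS
  · right
    push_neg at h
    obtain ⟨i, hi⟩ := h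
    refine ⟨i, fun K => ?_⟩
    have := hi K
    unfold clearAt at this
    push_neg at this
    obtain ⟨l, hl, S, hS, a, haS, ha⟩ := this
    exact ⟨l, hl, S, hS, a, haS, ha⟩

/-- antitone powers in ℝ≥0∞ -/
lemma pow_anti {q : ENNReal} (hq : q ≤ 1) {m n : ℕ} (h : m ≤ n) : q ^ n ≤ q ^ m := by
  have : q ^ n = q ^ (n - m) * q ^ m := by
    rw [← pow_add]
    congr 1
    omega
  rw [this]
  calc q ^ (n - m) * q ^ m ≤ 1 * q ^ m := by
        apply mul_le_mul_left
        exact pow_le_one' hq _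
    _ = q ^ m := one_mul _

lemma tsum_inv_two_pow : ∑' l : ℕ, ((2 : ENNReal)⁻¹) ^ l = 2 := by
  rw [ENNReal.tsum_geometric, ENNReal.one_sub_inv_two, inv_inv]

end Stab17

open Stab17 in
/-- Self-stabilisation from random perturbations: if a cellular automaton `F`
stabilises an SFT `X` from finite perturbations in linear time, then `F` also
stabilises `X` from random perturbations: the elements of `X` are fixed, and
for every `δ > 0` there is `ε > 0` such that for every `x ∈ X` and every
`ε`-perturbation `x̃` of `x`, there is a random configuration `y` with values in
`X` such that almost surely `F^t(x̃) → y` cellwise, and `P(y_k ≠ x_k) ≤ δ` for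
every cell `k`. -/
theorem stmt17 {d : ℕ} (hd : 1 ≤ d) {A : Type} [Fintype A]
    [MeasurableSpace A] [DiscreteMeasurableSpace A]
    (X : Set ((Fin d → ℤ) → A)) (hXsft : IsSFT X) (hXne : X.Nonempty)
    (F : ((Fin d → ℤ) → A) → ((Fin d → ℤ) → A))
    (hFCA : ∃ (N : Finset (Fin d → ℤ)) (f : ({n // n ∈ N} → A) → A),
      ∀ x i, F x i = f (fun n => x (i + n.val)))
    (τ : ℕ → ℕ) (c₀ : ℕ) (hlin : ∀ n, τ n ≤ c₀ * n + c₀)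
    (hFfix : ∀ x ∈ X, F x = x)
    (hFstab : ∀ y : (Fin d → ℤ) → A, (∃ x ∈ X, (diffSet x y).Finite) →
      ∃ t ≤ τ (pdist X y), F^[t] y ∈ X) :
    (∀ x ∈ X, F x = x) ∧
    ∀ δ : ℝ, 0 < δ → ∃ ε : ℝ, 0 < ε ∧
      ∀ (Ω : Type) (_ : MeasurableSpace Ω) (P : Measure Ω)
        (_ : IsProbabilityMeasure P),
        ∀ x ∈ X, ∀ xt : Ω → ((Fin d → ℤ) → A),
          Measurable xt →
          (∀ I : Finset (Fin d → ℤ),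
            P {ω | ∀ i ∈ I, xt ω i ≠ x i} ≤ ENNReal.ofReal ε ^ I.card) →
          ∃ y : Ω → ((Fin d → ℤ) → A),
            (∀ ω, y ω ∈ X) ∧
            P {ω | ∀ k, ∃ T, ∀ t ≥ T, F^[t] (xt ω) k = y ω k} = 1 ∧
            ∀ k, P {ω | y ω k ≠ x k} ≤ ENNReal.ofReal δ := by
  classical
  obtain ⟨U, Pat, hXeq⟩ := hXsft
  obtain ⟨N, f, hf⟩ := hFCA
  refine ⟨hFfix, ?_⟩
  intro δ hδ
  obtain ⟨ρ, hρ1, hbnd⟩ : ∃ ρ : ℕ, 1 ≤ ρ ∧ ∀ v ∈ N ∪ U, ∀ j, (v j).natAbs ≤ ρ := by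
    refine ⟨(N ∪ U).sup (fun v => Finset.univ.sup fun j => (v j).natAbs) + 1,
      Nat.le_add_left 1 _, ?_⟩
    intro v hv j
    have h1 : (Finset.univ.sup fun j => (v j).natAbs) ≤
        (N ∪ U).sup (fun v => Finset.univ.sup fun j => (v j).natAbs) :=
      Finset.le_sup (f := fun v => Finset.univ.sup fun j => (v j).natAbs) hv
    have h2 : (v j).natAbs ≤ Finset.univ.sup fun j => (v j).natAbs :=
      Finset.le_sup (f := fun j => (v j).natAbs) (Finset.mem_univ j)
    exact le_trans (le_trans h2 h1) (Nat.le_succ _)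
  have hloc : ∀ u v i, (∀ a, nd a i ≤ ρ → u a = v a) → F u i = F v i := by
    intro u v i h
    rw [hf, hf]
    congr 1
    funext n
    apply h
    rw [nd_le_iff]
    intro j
    have := hbnd n.val (Finset.mem_union_left _ n.property) j
    simp only [Pi.add_apply]
    omega
  have hUρ : ∀ u ∈ U, ∀ j, (u j).natAbs ≤ ρ :=
    fun u hu => hbnd u (Finset.mem_union_right _ hu)
  have hstab' : ∀ y, (∃ x ∈ X, (diffSet x y).Finite) →
      ∃ t, F^[t] y ∈ X ∧ t ≤ c₀ * pdist X y + c₀ := by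
    intro y hy
    obtain ⟨t, ht, htX⟩ := hFstab y hy
    exact ⟨t, htX, le_trans ht (hlin _)⟩
  let C : Ctx d A := ⟨X, F, c₀, ρ, hρ1, U, Pat, hXeq, hUρ, hloc, hFfix, hstab'⟩
  set B : ℕ := Bconst C with hBdef
  clear_value B
  have hB1 : 1 ≤ B := by
    rw [hBdef]
    exact Nat.one_le_pow _ _ (by have := Bc_pos C (Dk C 1); omega)
  have hden : (0:ℝ) < 2 * B + 2 := by positivity
  refine ⟨min (δ / (2 * B + 2)) (1 / (2 * B + 2)),
    lt_min (div_pos hδ hden) (div_pos one_pos hden), ?_⟩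
  intro Ω inst P instP x hx xt _ hpert
  set εr : ℝ := min (δ / (2 * B + 2)) (1 / (2 * B + 2)) with hεr
  clear_value εr
  have hεpos : 0 < εr := by
    rw [hεr]; exact lt_min (div_pos hδ hden) (div_pos one_pos hden)
  have hεle1 : εr ≤ 1 / (2 * B + 2) := by rw [hεr]; exact min_le_right _ _
  have hεle2 : εr ≤ δ / (2 * B + 2) := by rw [hεr]; exact min_le_left _ _
  set εE : ENNReal := ENNReal.ofReal εr with hεE
  clear_value εE
  set q : ENNReal := (B : ENNReal) * εE with hqdef
  clear_value q
  have hq_eq : q = ENNReal.ofReal (B * εr) := by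
    rw [hqdef, hεE, ENNReal.ofReal_mul (by positivity : (0:ℝ) ≤ (B:ℝ))]
    congr 1
    exact (ENNReal.ofReal_natCast B).symm
  have hhalf : ENNReal.ofReal ((1:ℝ)/2) = 2⁻¹ := by
    rw [show (1/2:ℝ) = (2:ℝ)⁻¹ by norm_num,
      ENNReal.ofReal_inv_of_pos (by norm_num : (0:ℝ) < 2)]
    norm_num
  have hBr : (1:ℝ) ≤ (B:ℝ) := by exact_mod_cast hB1
  have hq_half : q ≤ 2⁻¹ := by
    rw [hq_eq, ← hhalf]
    apply ENNReal.ofReal_le_ofReal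
    have h2 : (B:ℝ) * εr ≤ (B:ℝ) * (1 / (2 * B + 2)) :=
      mul_le_mul_of_nonneg_left hεle1 (by positivity)
    have h3 : (B:ℝ) * (1 / (2 * B + 2)) ≤ 1/2 := by
      rw [mul_one_div, div_le_div_iff₀ hden (by norm_num : (0:ℝ) < 2)]
      nlinarith
    linarith
  have hq_one : q ≤ 1 := le_trans hq_half (ENNReal.inv_le_one.mpr one_le_two)
  have h2q : 2 * q ≤ ENNReal.ofReal δ := by
    have h2 : (2:ENNReal) = ENNReal.ofReal (2:ℝ) := by norm_num
    rw [hq_eq, h2, ← ENNReal.ofReal_mul (by norm_num : (0:ℝ) ≤ 2)]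
    apply ENNReal.ofReal_le_ofReal
    have hc : δ / (2 * B + 2) * (2 * B + 2) = δ := div_mul_cancel₀ _ (ne_of_gt hden)
    have hBnn : (0:ℝ) ≤ (B:ℝ) := by positivity
    nlinarith [mul_le_mul_of_nonneg_left hεle2 hBnn, hδ.le,
      div_nonneg hδ.le hden.le]
  -- bound on survivor events
  have hMB : ∀ k : ℕ, ((Mw C k : ℕ) : ENNReal) ≤ (B : ENNReal) ^ (2^k) := by
    intro k
    have h1 : Mw C k ≤ B ^ (2^k) := by
      rw [hBdef]
      exact le_trans (Mw_le_Φ C k) (Φ_le C k)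
    calc ((Mw C k : ℕ) : ENNReal) ≤ ((B ^ (2^k) : ℕ) : ENNReal) := by
          exact_mod_cast h1
      _ = (B : ENNReal) ^ (2^k) := by push_cast; ring
  have hEs : ∀ (i : Fin d → ℤ) (k : ℕ),
      P {ω | i ∈ EsF C (Eset x (xt ω)) k} ≤ ((Mw C k : ℕ) : ENNReal) * εE ^ (2^k) := by
    intro i k
    have hsub : {ω | i ∈ EsF C (Eset x (xt ω)) k} ⊆
        ⋃ W ∈ Wit C k i, {ω | ∀ a ∈ W, xt ω a ≠ x a} := by
      intro ω hω
      obtain ⟨W, hW, hWE⟩ := Wit_witness C (Eset x (xt ω)) hω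
      exact Set.mem_biUnion hW (fun a ha => hWE a ha)
    calc P {ω | i ∈ EsF C (Eset x (xt ω)) k}
        ≤ P (⋃ W ∈ Wit C k i, {ω | ∀ a ∈ W, xt ω a ≠ x a}) := measure_mono hsub
      _ ≤ ∑ W ∈ Wit C k i, P {ω | ∀ a ∈ W, xt ω a ≠ x a} :=
          measure_biUnion_finset_le _ _
      _ ≤ ∑ _W ∈ Wit C k i, εE ^ (2^k) := by
          apply Finset.sum_le_sum
          intro W hW
          have hc := (Wit_spec C W hW).1
          have hp := hpert W
          rw [hc] at hp
          exact hp
      _ = (Wit C k i).card • (εE ^ (2^k)) := Finset.sum_const _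
      _ = ((Wit C k i).card : ENNReal) * εE ^ (2^k) := by rw [nsmul_eq_mul]
      _ ≤ ((Mw C k : ℕ) : ENNReal) * εE ^ (2^k) := by
          apply mul_le_mul_left
          exact_mod_cast Wit_card C
  -- the "island of level l near i" events
  have hA : ∀ (i : Fin d → ℤ) (l : ℕ),
      P (⋃ j ∈ ballF i (C.ρ * σk C (l+1)), {ω | j ∈ EsF C (Eset x (xt ω)) l}) ≤
        q ^ (2^l) := by
    intro i l
    have hcard : ((ballF i (C.ρ * σk C (l+1))).card : ENNReal) * (((Mw C l : ℕ)) : ENNReal)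
        ≤ (B : ENNReal) ^ (2^l) := by
      have h1 : (ballF i (C.ρ * σk C (l+1))).card * Mw C l ≤ B ^ (2^l) := by
        rw [card_ballF]
        have h2 : (2 * (C.ρ * σk C (l+1)) + 1) ^ d = Bc C (C.ρ * σk C (l+1)) := rfl
        rw [h2]
        have h3 : Bc C (C.ρ * σk C (l+1)) ≤ Bc C (Dk C (l+1)) := Bc_mono C (ρσ_le_Dk C l)
        have h4 : Bc C (Dk C (l+1)) ≤ Bc C (Dk C (l+1)) ^ 2 := by
          nlinarith [Bc_pos C (Dk C (l+1))]
        calc Bc C (C.ρ * σk C (l+1)) * Mw C l ≤ Bc C (Dk C (l+1)) ^ 2 * Mw C l := by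
              apply Nat.mul_le_mul_right
              omega
          _ = Φ C l := rfl
          _ ≤ Bconst C ^ 2 ^ l := Φ_le C l
          _ = B ^ 2 ^ l := by rw [hBdef]
      calc ((ballF i (C.ρ * σk C (l+1))).card : ENNReal) * (((Mw C l : ℕ)) : ENNReal)
          = (((ballF i (C.ρ * σk C (l+1))).card * Mw C l : ℕ) : ENNReal) := by
            push_cast; ring
        _ ≤ (((B ^ (2^l) : ℕ)) : ENNReal) := by exact_mod_cast h1
        _ = (B : ENNReal) ^ (2^l) := by push_cast; ring
    calc P (⋃ j ∈ ballF i (C.ρ * σk C (l+1)), {ω | j ∈ EsF C (Eset x (xt ω)) l})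
        ≤ ∑ j ∈ ballF i (C.ρ * σk C (l+1)), P {ω | j ∈ EsF C (Eset x (xt ω)) l} :=
          measure_biUnion_finset_le _ _
      _ ≤ ∑ _j ∈ ballF i (C.ρ * σk C (l+1)), ((Mw C l : ℕ) : ENNReal) * εE ^ (2^l) :=
          Finset.sum_le_sum (fun j _ => hEs j l)
      _ = ((ballF i (C.ρ * σk C (l+1))).card : ENNReal) *
            (((Mw C l : ℕ) : ENNReal) * εE ^ (2^l)) := by
          rw [Finset.sum_const, nsmul_eq_mul]
      _ ≤ (B : ENNReal) ^ (2^l) * εE ^ (2^l) := by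
          rw [← mul_assoc]
          exact mul_le_mul_left hcard _
      _ = q ^ (2^l) := by rw [hqdef, mul_pow]
  have hqpow : ∀ k : ℕ, q ^ (2^k) ≤ 2⁻¹ ^ k := by
    intro k
    calc q ^ (2^k) ≤ (2⁻¹ : ENNReal) ^ (2^k) := pow_le_pow_left' hq_half _
      _ ≤ 2⁻¹ ^ k := pow_anti (ENNReal.inv_le_one.mpr one_le_two)
          (le_of_lt (Nat.lt_two_pow_self (n := k)))
  -- null sets
  have hNull1 : ∀ i : Fin d → ℤ,
      P (⋂ k, {ω | i ∈ EsF C (Eset x (xt ω)) k}) = 0 := by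
    intro i
    by_contra h
    obtain ⟨n, hn⟩ := ENNReal.exists_inv_two_pow_lt h
    have hle : P (⋂ k, {ω | i ∈ EsF C (Eset x (xt ω)) k}) ≤ 2⁻¹ ^ n := by
      calc P (⋂ k, {ω | i ∈ EsF C (Eset x (xt ω)) k})
          ≤ P {ω | i ∈ EsF C (Eset x (xt ω)) n} := measure_mono (Set.iInter_subset _ n)
        _ ≤ ((Mw C n : ℕ) : ENNReal) * εE ^ (2^n) := hEs i n
        _ ≤ (B : ENNReal) ^ (2^n) * εE ^ (2^n) := mul_le_mul_left (hMB n) _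
        _ = q ^ (2^n) := by rw [hqdef, mul_pow]
        _ ≤ 2⁻¹ ^ n := hqpow n
    exact absurd (lt_of_lt_of_le hn hle) (lt_irrefl _)
  have hNull2 : ∀ i : Fin d → ℤ,
      P (⋂ K, ⋃ l, ⋃ j ∈ ballF i (C.ρ * σk C ((K + l)+1)),
        {ω | j ∈ EsF C (Eset x (xt ω)) (K + l)}) = 0 := by
    intro i
    by_contra h
    obtain ⟨n, hn⟩ := ENNReal.exists_inv_two_pow_lt h
    have hle : P (⋂ K, ⋃ l, ⋃ j ∈ ballF i (C.ρ * σk C ((K + l)+1)),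
        {ω | j ∈ EsF C (Eset x (xt ω)) (K + l)}) ≤ 2⁻¹ ^ n := by
      calc P (⋂ K, ⋃ l, ⋃ j ∈ ballF i (C.ρ * σk C ((K + l)+1)),
            {ω | j ∈ EsF C (Eset x (xt ω)) (K + l)})
          ≤ P (⋃ l, ⋃ j ∈ ballF i (C.ρ * σk C ((n + l)+1)),
            {ω | j ∈ EsF C (Eset x (xt ω)) (n + l)}) := measure_mono (Set.iInter_subset _ n)
        _ ≤ ∑' l, P (⋃ j ∈ ballF i (C.ρ * σk C ((n + l)+1)),
            {ω | j ∈ EsF C (Eset x (xt ω)) (n + l)}) := measure_iUnion_le _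
        _ ≤ ∑' l : ℕ, q ^ (n+1) * 2⁻¹ ^ l := by
            apply ENNReal.tsum_le_tsum
            intro l
            calc P (⋃ j ∈ ballF i (C.ρ * σk C ((n + l)+1)),
                  {ω | j ∈ EsF C (Eset x (xt ω)) (n + l)})
                ≤ q ^ (2 ^ (n + l)) := hA i (n + l)
              _ ≤ q ^ (n + 1 + l) := pow_anti hq_one (by
                  have := Nat.lt_two_pow_self (n := n + l)
                  omega)
              _ = q ^ (n+1) * q ^ l := by rw [pow_add]
              _ ≤ q ^ (n+1) * 2⁻¹ ^ l :=
                  mul_le_mul_right (pow_le_pow_left' hq_half _) _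
        _ = q ^ (n+1) * 2 := by rw [ENNReal.tsum_mul_left, tsum_inv_two_pow]
        _ ≤ 2⁻¹ ^ (n+1) * 2 := mul_le_mul_left (pow_le_pow_left' hq_half _) _
        _ = 2⁻¹ ^ n * (2⁻¹ * 2) := by ring
        _ = 2⁻¹ ^ n := by
            rw [ENNReal.inv_mul_cancel (by norm_num) (by norm_num), mul_one]
    exact absurd (lt_of_lt_of_le hn hle) (lt_irrefl _)
  -- the good event
  have hGoodC : P {ω | ¬ GoodE C (Eset x (xt ω))} = 0 := by
    refine le_antisymm ?_ zero_le
    have hsub : {ω | ¬ GoodE C (Eset x (xt ω))} ⊆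
        (⋃ i, ⋂ k, {ω | i ∈ EsF C (Eset x (xt ω)) k}) ∪
        (⋃ i, ⋂ K, ⋃ l, ⋃ j ∈ ballF i (C.ρ * σk C ((K + l)+1)),
          {ω | j ∈ EsF C (Eset x (xt ω)) (K + l)}) := by
      intro ω hω
      rcases notGood_cases C hω with ⟨i, _, hik⟩ | ⟨i, hiK⟩
      · left
        exact Set.mem_iUnion.mpr ⟨i, Set.mem_iInter.mpr (fun k => hik k)⟩
      · right
        refine Set.mem_iUnion.mpr ⟨i, Set.mem_iInter.mpr (fun K => ?_)⟩
        obtain ⟨l, hl, S, hS, a, haS, ha⟩ := hiK K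
        refine Set.mem_iUnion.mpr ⟨l - K, ?_⟩
        have hKl : K + (l - K) = l := by omega
        rw [hKl]
        refine Set.mem_iUnion₂.mpr ⟨a, ?_, ?_⟩
        · rw [mem_ballF, nd_symm]
          exact ha
        · exact island_sub C (Eset x (xt ω)) hS haS
    calc P {ω | ¬ GoodE C (Eset x (xt ω))}
        ≤ P ((⋃ i, ⋂ k, {ω | i ∈ EsF C (Eset x (xt ω)) k}) ∪
          (⋃ i, ⋂ K, ⋃ l, ⋃ j ∈ ballF i (C.ρ * σk C ((K + l)+1)),
            {ω | j ∈ EsF C (Eset x (xt ω)) (K + l)})) := measure_mono hsub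
      _ ≤ P (⋃ i, ⋂ k, {ω | i ∈ EsF C (Eset x (xt ω)) k}) +
          P (⋃ i, ⋂ K, ⋃ l, ⋃ j ∈ ballF i (C.ρ * σk C ((K + l)+1)),
            {ω | j ∈ EsF C (Eset x (xt ω)) (K + l)}) := measure_union_le _ _
      _ ≤ 0 := by
          rw [measure_iUnion_null (fun i => hNull1 i),
            measure_iUnion_null (fun i => hNull2 i)]
          simp
  have hPGood : P {ω | GoodE C (Eset x (xt ω))} = 1 := by
    apply le_antisymm prob_le_one
    have huniv : (Set.univ : Set Ω) ⊆
        {ω | GoodE C (Eset x (xt ω))} ∪ {ω | ¬ GoodE C (Eset x (xt ω))} := by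
      intro ω _
      by_cases h : GoodE C (Eset x (xt ω))
      · exact Or.inl h
      · exact Or.inr h
    calc (1:ENNReal) = P Set.univ := measure_univ.symm
      _ ≤ P ({ω | GoodE C (Eset x (xt ω))} ∪ {ω | ¬ GoodE C (Eset x (xt ω))}) :=
          measure_mono huniv
      _ ≤ P {ω | GoodE C (Eset x (xt ω))} + P {ω | ¬ GoodE C (Eset x (xt ω))} :=
          measure_union_le _ _
      _ = P {ω | GoodE C (Eset x (xt ω))} := by rw [hGoodC, add_zero]
  -- the limit random configuration
  refine ⟨fun ω => if h : GoodE C (Eset x (xt ω)) then limCfg C x (xt ω) h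
    else hXne.choose, ?_, ?_, ?_⟩
  · intro ω
    show (if h : GoodE C (Eset x (xt ω)) then limCfg C x (xt ω) h
      else hXne.choose) ∈ X
    by_cases h : GoodE C (Eset x (xt ω))
    · rw [dif_pos h]
      exact limCfg_memX C x (xt ω) hx h
    · rw [dif_neg h]
      exact hXne.choose_spec
  · -- attraction
    apply le_antisymm prob_le_one
    have hsub : {ω | GoodE C (Eset x (xt ω))} ⊆ {ω | ∀ k, ∃ T, ∀ t ≥ T, F^[t] (xt ω) k =
        (if h : GoodE C (Eset x (xt ω)) then limCfg C x (xt ω) h else hXne.choose) k} := by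
      intro ω hω
      have hg : GoodE C (Eset x (xt ω)) := hω
      show ∀ k, ∃ T, ∀ t ≥ T, F^[t] (xt ω) k =
        (if h : GoodE C (Eset x (xt ω)) then limCfg C x (xt ω) h else hXne.choose) k
      intro k
      rw [dif_pos hg]
      obtain ⟨T, hT⟩ := limCfg_conv C x (xt ω) hx hg k
      exact ⟨T, fun t ht => hT t ht⟩
    calc (1:ENNReal) = P {ω | GoodE C (Eset x (xt ω))} := hPGood.symm
      _ ≤ P _ := measure_mono hsub
  · -- stability
    intro k
    have hsub : {ω | (if h : GoodE C (Eset x (xt ω)) then limCfg C x (xt ω) h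
        else hXne.choose) k ≠ x k}
        ⊆ {ω | ¬ GoodE C (Eset x (xt ω))} ∪
          ⋃ l, ⋃ j ∈ ballF k (C.ρ * σk C (l+1)), {ω | j ∈ EsF C (Eset x (xt ω)) l} := by
      intro ω hω
      have hω' : (if h : GoodE C (Eset x (xt ω)) then limCfg C x (xt ω) h
        else hXne.choose) k ≠ x k := hω
      by_cases h : GoodE C (Eset x (xt ω))
      · right
        rw [dif_pos h] at hω'
        obtain ⟨l, S, hS, a, haS, ha⟩ := limCfg_diff C x (xt ω) hx h k hω'
        refine Set.mem_iUnion.mpr ⟨l, Set.mem_iUnion₂.mpr ⟨a, ?_, ?_⟩⟩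
        · rw [mem_ballF, nd_symm]
          exact ha
        · exact island_sub C (Eset x (xt ω)) hS haS
      · left
        exact h
    calc P {ω | (if h : GoodE C (Eset x (xt ω)) then limCfg C x (xt ω) h
          else hXne.choose) k ≠ x k}
        ≤ P ({ω | ¬ GoodE C (Eset x (xt ω))} ∪
            ⋃ l, ⋃ j ∈ ballF k (C.ρ * σk C (l+1)), {ω | j ∈ EsF C (Eset x (xt ω)) l}) :=
          measure_mono hsub
      _ ≤ P {ω | ¬ GoodE C (Eset x (xt ω))} +
          P (⋃ l, ⋃ j ∈ ballF k (C.ρ * σk C (l+1)), {ω | j ∈ EsF C (Eset x (xt ω)) l}) :=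
          measure_union_le _ _
      _ ≤ 0 + ∑' l, P (⋃ j ∈ ballF k (C.ρ * σk C (l+1)),
            {ω | j ∈ EsF C (Eset x (xt ω)) l}) := by
          rw [hGoodC]
          exact add_le_add_right (measure_iUnion_le _) 0
      _ = ∑' l, P (⋃ j ∈ ballF k (C.ρ * σk C (l+1)),
            {ω | j ∈ EsF C (Eset x (xt ω)) l}) := by rw [zero_add]
      _ ≤ ∑' l : ℕ, q * 2⁻¹ ^ l := by
          apply ENNReal.tsum_le_tsum
          intro l
          calc P (⋃ j ∈ ballF k (C.ρ * σk C (l+1)), {ω | j ∈ EsF C (Eset x (xt ω)) l})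
              ≤ q ^ (2 ^ l) := hA k l
            _ ≤ q ^ (l + 1) := pow_anti hq_one (by
                have := Nat.lt_two_pow_self (n := l)
                omega)
            _ = q * q ^ l := by rw [pow_succ, mul_comm]
            _ ≤ q * 2⁻¹ ^ l := mul_le_mul_right (pow_le_pow_left' hq_half _) _
      _ = q * 2 := by rw [ENNReal.tsum_mul_left, tsum_inv_two_pow]
      _ = 2 * q := mul_comm _ _
      _ ≤ ENNReal.ofReal δ := h2q
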